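/- Completeness of SKS for boolean tautologies in the cut-free fragment {ai↓, s, c↓, w↓}: every structure R whose boolean evaluation is true under all assignments is provable using only ai↓, switch, contraction c↓, weakening w↓ and the structural equivalence. -/
import Mathlib


/-- Structures of system SKS. -/
inductive Str : Type
  | f : Str
  | t : Str
  | atom (n : ℕ) : Str
  | or (A B : Str) : Str
  | and (A B : Str) : Str
  | neg (A : Str) : Str

/-- Positive contexts: a structure with one hole, not under a negation. -/
inductive Ctx : Type
  | hole : Ctx
  | orl (S : Ctx) (T : Str) : Ctx
  | orr (T : Str) (S : Ctx) : Ctx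
  | andl (S : Ctx) (T : Str) : Ctx
  | andr (T : Str) (S : Ctx) : Ctx

def Ctx.fill : Ctx → Str → Str
  | .hole, R => R
  | .orl S T, R => .or (S.fill R) T
  | .orr T S, R => .or T (S.fill R)
  | .andl S T, R => .and (S.fill R) T
  | .andr T S, R => .and T (S.fill R)

/-- Structural equivalence `=` of SKS. -/
inductive equiv : Str → Str → Prop
  | refl (R) : equiv R R
  | symm {A B} : equiv A B → equiv B A
  | trans {A B C} : equiv A B → equiv B C → equiv A C
  | or_congr {A B C D} : equiv A B → equiv C D → equiv (.or A C) (.or B D)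
  | and_congr {A B C D} : equiv A B → equiv C D → equiv (.and A C) (.and B D)
  | neg_congr {A B} : equiv A B → equiv (.neg A) (.neg B)
  | or_assoc (A B C) : equiv (.or (.or A B) C) (.or A (.or B C))
  | or_comm (A B) : equiv (.or A B) (.or B A)
  | and_assoc (A B C) : equiv (.and (.and A B) C) (.and A (.and B C))
  | and_comm (A B) : equiv (.and A B) (.and B A)
  | dm_or (A B) : equiv (.neg (.or A B)) (.and (.neg A) (.neg B))
  | dm_and (A B) : equiv (.neg (.and A B)) (.or (.neg A) (.neg B))
  | neg_neg (A) : equiv (.neg (.neg A)) A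
  | neg_f : equiv (.neg .f) .t
  | neg_t : equiv (.neg .t) .f
  | or_f (R) : equiv (.or .f R) R
  | and_t (R) : equiv (.and .t R) R
  | or_t_t : equiv (.or .t .t) .t
  | and_f_f : equiv (.and .f .f) .f

/-- Boolean evaluation of structures. -/
def eval (v : ℕ → Bool) : Str → Bool
  | .f => false
  | .t => true
  | .atom n => v n
  | .or A B => eval v A || eval v B
  | .and A B => eval v A && eval v B
  | .neg A => !(eval v A)

/-- Steps of the cut-free (down) fragment {ai↓, s, c↓, w↓}. -/
inductive stepD : Str → Str → Prop
  | ai_down (S : Ctx) (a : ℕ) :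
      stepD (S.fill .t) (S.fill (.or (.atom a) (.neg (.atom a))))
  | s (S : Ctx) (R U T : Str) :
      stepD (S.fill (.and (.or R U) T)) (S.fill (.or (.and R T) U))
  | c_down (S : Ctx) (R : Str) : stepD (S.fill (.or R R)) (S.fill R)
  | w_down (S : Ctx) (R : Str) : stepD (S.fill .f) (S.fill R)

inductive derivD : Str → Str → Prop
  | refl (R) : derivD R R
  | step {A B C} : stepD A B → derivD B C → derivD A C
  | eq {A B C} : equiv A B → derivD B C → derivD A C

section Aux

deriving instance DecidableEq for Str

namespace equiv
lemma orc {A B C : Str} (h : equiv A B) : equiv (.or A C) (.or B C) :=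
  equiv.or_congr h (equiv.refl C)
lemma orc' {A B C : Str} (h : equiv A B) : equiv (.or C A) (.or C B) :=
  equiv.or_congr (equiv.refl C) h
end equiv

/-- eval respects equiv -/
lemma eval_equiv (v : ℕ → Bool) {A B : Str} (h : equiv A B) : eval v A = eval v B := by
  induction h <;> simp [eval, *] <;>
    first
    | exact Bool.or_assoc _ _ _
    | exact Bool.or_comm _ _
    | exact Bool.and_assoc _ _ _
    | exact Bool.and_comm _ _
    | rfl

def Ctx.comp : Ctx → Ctx → Ctx
  | .hole, D => D
  | .orl S T, D => .orl (S.comp D) T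
  | .orr T S, D => .orr T (S.comp D)
  | .andl S T, D => .andl (S.comp D) T
  | .andr T S, D => .andr T (S.comp D)

lemma Ctx.fill_comp (C D : Ctx) (R : Str) : (C.comp D).fill R = C.fill (D.fill R) := by
  induction C <;> simp [Ctx.comp, Ctx.fill, *]

lemma equiv_fill (C : Ctx) {A B : Str} (h : equiv A B) : equiv (C.fill A) (C.fill B) := by
  induction C <;> simp [Ctx.fill] <;>
    first
    | exact h
    | exact equiv.or_congr (by assumption) (equiv.refl _)
    | exact equiv.or_congr (equiv.refl _) (by assumption)
    | exact equiv.and_congr (by assumption) (equiv.refl _)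
    | exact equiv.and_congr (equiv.refl _) (by assumption)

lemma derivD.trans {A B C : Str} (h1 : derivD A B) (h2 : derivD B C) : derivD A C := by
  induction h1 with
  | refl => exact h2
  | step s _ ih => exact derivD.step s (ih h2)
  | eq e _ ih => exact derivD.eq e (ih h2)

lemma derivD.of_equiv {A B : Str} (h : equiv A B) : derivD A B := derivD.eq h (derivD.refl B)

lemma derivD.post {A B C : Str} (h1 : derivD A B) (h2 : equiv B C) : derivD A C :=
  h1.trans (derivD.of_equiv h2)

lemma derivD.single {A B : Str} (h : stepD A B) : derivD A B := derivD.step h (derivD.refl B)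

lemma stepD.fill (C : Ctx) {A B : Str} (h : stepD A B) : stepD (C.fill A) (C.fill B) := by
  cases h with
  | ai_down S a =>
      rw [← Ctx.fill_comp, ← Ctx.fill_comp]; exact stepD.ai_down (C.comp S) a
  | s S R U T =>
      rw [← Ctx.fill_comp, ← Ctx.fill_comp]; exact stepD.s (C.comp S) R U T
  | c_down S R =>
      rw [← Ctx.fill_comp, ← Ctx.fill_comp]; exact stepD.c_down (C.comp S) R
  | w_down S R =>
      rw [← Ctx.fill_comp, ← Ctx.fill_comp]; exact stepD.w_down (C.comp S) R

lemma derivD.fill (C : Ctx) {A B : Str} (h : derivD A B) : derivD (C.fill A) (C.fill B) := by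
  induction h with
  | refl => exact derivD.refl _
  | step s _ ih => exact derivD.step (s.fill C) ih
  | eq e _ ih => exact derivD.eq (equiv_fill C e) ih

/-- from B derive A ∨ B (weakening on the left disjunct) -/
lemma derivD.wkl (A B : Str) : derivD B (.or A B) :=
  derivD.eq (equiv.symm (equiv.or_f B))
    (derivD.single (stepD.w_down (Ctx.orl Ctx.hole B) A))

/-- from B derive B ∨ A -/
lemma derivD.wkr (A B : Str) : derivD B (.or B A) :=
  (derivD.wkl A B).post (equiv.or_comm A B)

end Aux

section NNF

mutual
def nnf : Str → Str
  | .f => .f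
  | .t => .t
  | .atom n => .atom n
  | .or A B => .or (nnf A) (nnf B)
  | .and A B => .and (nnf A) (nnf B)
  | .neg A => nnfN A
def nnfN : Str → Str
  | .f => .t
  | .t => .f
  | .atom n => .neg (.atom n)
  | .or A B => .and (nnfN A) (nnfN B)
  | .and A B => .or (nnfN A) (nnfN B)
  | .neg A => nnf A
end

lemma nnf_equiv : ∀ A : Str, equiv A (nnf A) ∧ equiv (.neg A) (nnfN A) := by
  intro A
  induction A with
  | f => exact ⟨equiv.refl _, equiv.neg_f⟩
  | t => exact ⟨equiv.refl _, equiv.neg_t⟩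
  | atom n => exact ⟨equiv.refl _, equiv.refl _⟩
  | or A B ihA ihB =>
      exact ⟨equiv.or_congr ihA.1 ihB.1,
             equiv.trans (equiv.dm_or A B) (equiv.and_congr ihA.2 ihB.2)⟩
  | and A B ihA ihB =>
      exact ⟨equiv.and_congr ihA.1 ihB.1,
             equiv.trans (equiv.dm_and A B) (equiv.or_congr ihA.2 ihB.2)⟩
  | neg A ihA =>
      exact ⟨ihA.2, equiv.trans (equiv.neg_neg A) ihA.1⟩

def isNNF : Str → Prop
  | .f => True
  | .t => True
  | .atom _ => True
  | .or A B => isNNF A ∧ isNNF B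
  | .and A B => isNNF A ∧ isNNF B
  | .neg (.atom _) => True
  | .neg _ => False

lemma nnf_isNNF : ∀ A : Str, isNNF (nnf A) ∧ isNNF (nnfN A) := by
  intro A
  induction A with
  | f => exact ⟨trivial, trivial⟩
  | t => exact ⟨trivial, trivial⟩
  | atom n => exact ⟨trivial, trivial⟩
  | or A B ihA ihB => exact ⟨⟨ihA.1, ihB.1⟩, ⟨ihA.2, ihB.2⟩⟩
  | and A B ihA ihB => exact ⟨⟨ihA.1, ihB.1⟩, ⟨ihA.2, ihB.2⟩⟩
  | neg A ihA => exact ⟨ihA.2, ihA.1⟩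

end NNF

section Seq

def disj : List Str → Str
  | [] => .f
  | A :: Γ => .or A (disj Γ)

lemma disj_perm : ∀ {Γ Δ : List Str}, Γ.Perm Δ → equiv (disj Γ) (disj Δ) := by
  intro Γ Δ h
  induction h with
  | nil => exact equiv.refl _
  | cons x _ ih => exact equiv.or_congr (equiv.refl x) ih
  | swap x y l =>
      exact equiv.trans (equiv.symm (equiv.or_assoc y x (disj l)))
        (equiv.trans (equiv.orc (equiv.or_comm y x)) (equiv.or_assoc x y (disj l)))
  | trans _ _ ih1 ih2 => exact equiv.trans ih1 ih2

lemma eval_disj (v : ℕ → Bool) : ∀ Γ : List Str, eval v (disj Γ) = Γ.any (fun A => eval v A) := by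
  intro Γ
  induction Γ with
  | nil => rfl
  | cons A Γ ih => simp [disj, eval, ih]

def sz : Str → ℕ
  | .f => 1
  | .t => 1
  | .atom _ => 1
  | .or A B => sz A + sz B + 1
  | .and A B => sz A + sz B + 1
  | .neg A => sz A + 1

lemma sz_pos (A : Str) : 1 ≤ sz A := by cases A <;> simp [sz] <;> omega

def lsize (Γ : List Str) : ℕ := (Γ.map sz).sum

lemma lsize_perm {Γ Δ : List Str} (h : Γ.Perm Δ) : lsize Γ = lsize Δ :=
  List.Perm.sum_eq (h.map sz)

lemma lsize_cons (A : Str) (Γ : List Str) : lsize (A :: Γ) = sz A + lsize Γ := by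
  simp [lsize]

/-- The ∧-rule of the sequent calculus, deep-inference style. -/
lemma and_combine {A B X : Str} (d1 : derivD .t (.or A X)) (d2 : derivD .t (.or B X)) :
    derivD .t (.or (.and A B) X) := by
  have h0 : derivD Str.t (.and .t .t) := derivD.of_equiv (equiv.symm (equiv.and_t .t))
  have h1 : derivD (Str.and .t .t) (.and (.or A X) .t) := d1.fill (Ctx.andl Ctx.hole .t)
  have h2 : derivD (Str.and (.or A X) .t) (.and (.or A X) (.or B X)) :=
    d2.fill (Ctx.andr (.or A X) Ctx.hole)
  have h3 : derivD (Str.and (.or A X) (.or B X)) (.or (.and A (.or B X)) X) :=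
    derivD.single (stepD.s Ctx.hole A X (.or B X))
  have h4 : equiv (Str.or (.and A (.or B X)) X) (.or (.and (.or B X) A) X) :=
    equiv.orc (equiv.and_comm A (.or B X))
  have h5 : derivD (Str.or (.and (.or B X) A) X) (.or (.or (.and B A) X) X) :=
    derivD.single (stepD.s (Ctx.orl Ctx.hole X) B X A)
  have h6 : equiv (Str.or (.or (.and B A) X) X) (.or (.and B A) (.or X X)) :=
    equiv.or_assoc _ _ _
  have h7 : derivD (Str.or (.and B A) (.or X X)) (.or (.and B A) X) :=
    derivD.single (stepD.c_down (Ctx.orr (.and B A) Ctx.hole) X)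
  have h8 : equiv (Str.or (.and B A) X) (.or (.and A B) X) :=
    equiv.orc (equiv.and_comm B A)
  exact ((((((h0.trans h1).trans h2).trans h3).post h4).trans h5).post h6 |>.trans h7).post h8

/-- The axiom rule: t derives a ∨ (¬a ∨ X). -/
lemma ax_rule (a : ℕ) (X : Str) :
    derivD .t (.or (.atom a) (.or (.neg (.atom a)) X)) := by
  have h0 : derivD Str.t (.or (.atom a) (.neg (.atom a))) :=
    derivD.single (stepD.ai_down Ctx.hole a)
  have h1 : derivD (Str.neg (.atom a)) (.or (.neg (.atom a)) X) := derivD.wkr X _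
  exact h0.trans (h1.fill (Ctx.orr (.atom a) Ctx.hole))

end Seq

section Main

lemma main_lemma : ∀ (n : ℕ) (Γ : List Str), lsize Γ ≤ n → (∀ A ∈ Γ, isNNF A) →
    (∀ v : ℕ → Bool, eval v (disj Γ) = true) → derivD .t (disj Γ) := by
  intro n
  induction n with
  | zero =>
      intro Γ hle _ ht
      cases Γ with
      | nil => exact absurd (ht (fun _ => true)) (by simp [disj, eval])
      | cons A Γ =>
          exfalso
          have := sz_pos A
          rw [lsize_cons] at hle; omega
  | succ n IH =>
      intro Γ hle hN ht
      classical
      by_cases hT : Str.t ∈ Γ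
      · -- t is a member: weaken everything
        have hp : Γ.Perm (Str.t :: Γ.erase Str.t) := List.perm_cons_erase hT
        set X := disj (Γ.erase Str.t) with hX
        have d1 : derivD Str.t (.or X .t) :=
          derivD.eq (equiv.symm (equiv.or_f .t))
            (derivD.single (stepD.w_down (Ctx.orl Ctx.hole .t) X))
        exact (d1.post (equiv.or_comm X .t)).post (equiv.symm (disj_perm hp))
      · by_cases hF : Str.f ∈ Γ
        · -- drop the f
          have hp : Γ.Perm (Str.f :: Γ.erase Str.f) := List.perm_cons_erase hF
          have hN' : ∀ A ∈ Γ.erase Str.f, isNNF A := fun A hA => hN A (List.mem_of_mem_erase hA)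
          have ht' : ∀ v : ℕ → Bool, eval v (disj (Γ.erase Str.f)) = true := by
            intro v
            have := ht v
            rw [eval_equiv v (disj_perm hp)] at this
            simpa [disj, eval] using this
          have hsz : lsize (Γ.erase Str.f) ≤ n := by
            have := lsize_perm hp
            rw [lsize_cons] at this
            simp [sz] at this
            omega
          have d := IH _ hsz hN' ht'
          refine d.post ?_
          refine equiv.trans ?_ (equiv.symm (disj_perm hp))
          exact equiv.symm (equiv.trans (equiv.refl _) (equiv.or_f _))
        · by_cases hO : ∃ A B, Str.or A B ∈ Γ
          · obtain ⟨A, B, hAB⟩ := hO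
            have hp : Γ.Perm (Str.or A B :: Γ.erase (Str.or A B)) := List.perm_cons_erase hAB
            set Γ' := Γ.erase (Str.or A B) with hΓ'
            have hNAB : isNNF (.or A B) := hN _ hAB
            have hN' : ∀ C ∈ A :: B :: Γ', isNNF C := by
              intro C hC
              rcases List.mem_cons.mp hC with rfl | hC
              · exact hNAB.1
              rcases List.mem_cons.mp hC with rfl | hC
              · exact hNAB.2
              · exact hN C (List.mem_of_mem_erase hC)
            have heq : equiv (disj Γ) (disj (A :: B :: Γ')) := by
              refine equiv.trans (disj_perm hp) ?_
              exact equiv.or_assoc A B (disj Γ')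
            have ht' : ∀ v : ℕ → Bool, eval v (disj (A :: B :: Γ')) = true := by
              intro v; rw [← eval_equiv v heq]; exact ht v
            have hsz : lsize (A :: B :: Γ') ≤ n := by
              have h1 := lsize_perm hp
              rw [lsize_cons] at h1
              rw [lsize_cons, lsize_cons]
              simp [sz] at h1
              omega
            exact (IH _ hsz hN' ht').post (equiv.symm heq)
          · by_cases hA : ∃ A B, Str.and A B ∈ Γ
            · obtain ⟨A, B, hAB⟩ := hA
              have hp : Γ.Perm (Str.and A B :: Γ.erase (Str.and A B)) := List.perm_cons_erase hAB
              set Γ' := Γ.erase (Str.and A B) with hΓ'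
              set X := disj Γ' with hX
              have hNAB : isNNF (.and A B) := hN _ hAB
              have hN1 : ∀ C ∈ A :: Γ', isNNF C := by
                intro C hC
                rcases List.mem_cons.mp hC with rfl | hC
                · exact hNAB.1
                · exact hN C (List.mem_of_mem_erase hC)
              have hN2 : ∀ C ∈ B :: Γ', isNNF C := by
                intro C hC
                rcases List.mem_cons.mp hC with rfl | hC
                · exact hNAB.2
                · exact hN C (List.mem_of_mem_erase hC)
              have htv : ∀ v : ℕ → Bool, (eval v A && eval v B) || eval v X = true := by
                intro v
                have := ht v
                rw [eval_equiv v (disj_perm hp)] at this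
                simpa [disj, eval] using this
              have ht1 : ∀ v : ℕ → Bool, eval v (disj (A :: Γ')) = true := by
                intro v
                have := htv v
                simp only [disj, eval, ← hX]
                cases hA : eval v A <;> cases hx : eval v X <;> simp_all
              have ht2 : ∀ v : ℕ → Bool, eval v (disj (B :: Γ')) = true := by
                intro v
                have := htv v
                simp only [disj, eval, ← hX]
                cases hB : eval v B <;> cases hx : eval v X <;> simp_all
              have h1 := lsize_perm hp
              rw [lsize_cons] at h1
              have hbp := sz_pos B
              have hap := sz_pos A
              have hsz1 : lsize (A :: Γ') ≤ n := by rw [lsize_cons]; simp [sz] at h1; omega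
              have hsz2 : lsize (B :: Γ') ≤ n := by rw [lsize_cons]; simp [sz] at h1; omega
              have d1 : derivD .t (.or A X) := IH _ hsz1 hN1 ht1
              have d2 : derivD .t (.or B X) := IH _ hsz2 hN2 ht2
              exact (and_combine d1 d2).post (equiv.symm (disj_perm hp))
            · -- all members are literals
              have hlit : ∀ A ∈ Γ, (∃ a, A = .atom a) ∨ (∃ a, A = .neg (.atom a)) := by
                intro A hAmem
                have hNA := hN A hAmem
                cases A with
                | f => exact absurd hAmem hF
                | t => exact absurd hAmem hT
                | atom a => exact Or.inl ⟨a, rfl⟩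
                | or A B => exact absurd hAmem (by exact fun h => hO ⟨A, B, h⟩) 
                | and A B => exact absurd hAmem (by exact fun h => hA ⟨A, B, h⟩)
                | neg A =>
                    cases A with
                    | atom a => exact Or.inr ⟨a, rfl⟩
                    | f => exact absurd hNA (by simp [isNNF])
                    | t => exact absurd hNA (by simp [isNNF])
                    | or A B => exact absurd hNA (by simp [isNNF])
                    | and A B => exact absurd hNA (by simp [isNNF])
                    | neg A => exact absurd hNA (by simp [isNNF])
              -- there must be a complementary pair
              have hpair : ∃ a, Str.atom a ∈ Γ ∧ Str.neg (.atom a) ∈ Γ := by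
                by_contra hnp
                push_neg at hnp
                set v : ℕ → Bool := fun m => decide (Str.neg (.atom m) ∈ Γ) with hv
                have := ht v
                rw [eval_disj] at this
                rw [List.any_eq_true] at this
                obtain ⟨A, hAmem, hAtrue⟩ := this
                rcases hlit A hAmem with ⟨a, rfl⟩ | ⟨a, rfl⟩
                · simp only [eval, hv, decide_eq_true_eq] at hAtrue
                  exact hnp a hAmem hAtrue
                · simp only [eval, hv, Bool.not_eq_true', decide_eq_false_iff_not] at hAtrue
                  exact hAtrue hAmem
              obtain ⟨a, ha1, ha2⟩ := hpair
              have hp1 : Γ.Perm (Str.atom a :: Γ.erase (.atom a)) := List.perm_cons_erase ha1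
              have ha2' : Str.neg (.atom a) ∈ Γ.erase (.atom a) :=
                (List.mem_erase_of_ne (by simp)).2 ha2
              have hp2 : (Γ.erase (.atom a)).Perm
                  (Str.neg (.atom a) :: (Γ.erase (.atom a)).erase (.neg (.atom a))) :=
                List.perm_cons_erase ha2'
              set X := disj ((Γ.erase (.atom a)).erase (.neg (.atom a))) with hX
              have heq : equiv (disj Γ) (.or (.atom a) (.or (.neg (.atom a)) X)) := by
                refine equiv.trans (disj_perm hp1) ?_
                exact equiv.or_congr (equiv.refl _) (disj_perm hp2)
              exact (ax_rule a X).post (equiv.symm heq)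

end Main

/-- completeness of the cut-free fragment of SKS:
every boolean tautology is provable using only ai↓, s, c↓, w↓ and `=`. -/
theorem cut_free_completeness (R : Str)
    (h : ∀ v : ℕ → Bool, eval v R = true) : derivD .t R := by
  have he : equiv R (nnf R) := (nnf_equiv R).1
  have hN : isNNF (nnf R) := (nnf_isNNF R).1
  have ht : ∀ v : ℕ → Bool, eval v (disj [nnf R]) = true := by
    intro v
    simp [disj, eval, ← eval_equiv v he, h v]
  have d := main_lemma (lsize [nnf R]) [nnf R] le_rfl (by simpa using hN) ht
  refine d.post ?_
  exact equiv.trans (equiv.trans (equiv.or_comm _ _) (equiv.or_f _)) (equiv.symm he)
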